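/- Let G be a group and t_1, ..., t_r ∈ G with t_r ⋯ t_1 = 1. Define a Hurwitz move on tuples as replacing adjacent entries (t_{i+1}, t_i) by (t_{i+1} t_i t_{i+1}^{-1}, t_{i+1}) or by (t_i, t_i^{-1} t_{i+1} t_i). Then for any f in the subgroup ⟨t_1, ..., t_r⟩ generated by the entries, the tuple (f t_r f^{-1}, ..., f t_1 f^{-1}) can be obtained from (t_r, ..., t_1) by a finite sequence of Hurwitz moves. -/

import Mathlib

/-- A Hurwitz move replaces an adjacent pair `(a, b)` in a list either by
`(a * b * a⁻¹, a)` (elementary transformation) or by `(b, b⁻¹ * a * b)`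
(its inverse move). Both moves preserve the length and the ordered product. -/
inductive HurwitzMove {G : Type*} [Group G] : List G → List G → Prop
  | left (l₁ l₂ : List G) (a b : G) :
      HurwitzMove (l₁ ++ a :: b :: l₂) (l₁ ++ (a * b * a⁻¹) :: a :: l₂)
  | right (l₁ l₂ : List G) (a b : G) :
      HurwitzMove (l₁ ++ a :: b :: l₂) (l₁ ++ b :: (b⁻¹ * a * b) :: l₂)

namespace HurwitzAux

variable {G : Type*} [Group G]

local notation "R" => Relation.ReflTransGen (@HurwitzMove G _)

lemma move_symm : ∀ {A B : List G}, HurwitzMove A B → HurwitzMove B A := by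
  intro A B h
  cases h with
  | left l₁ l₂ a b =>
      have := HurwitzMove.right l₁ l₂ (a * b * a⁻¹) a
      simpa [mul_assoc] using this
  | right l₁ l₂ a b =>
      have := HurwitzMove.left l₁ l₂ b (b⁻¹ * a * b)
      simpa [mul_assoc] using this

lemma move_map (f : G) {A B : List G} (h : HurwitzMove A B) :
    HurwitzMove (A.map fun x => f * x * f⁻¹) (B.map fun x => f * x * f⁻¹) := by
  cases h with
  | left l₁ l₂ a b =>
      have := HurwitzMove.left (l₁.map fun x => f * x * f⁻¹) (l₂.map fun x => f * x * f⁻¹)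
        (f * a * f⁻¹) (f * b * f⁻¹)
      simpa [List.map_append, mul_assoc] using this
  | right l₁ l₂ a b =>
      have := HurwitzMove.right (l₁.map fun x => f * x * f⁻¹) (l₂.map fun x => f * x * f⁻¹)
        (f * a * f⁻¹) (f * b * f⁻¹)
      simpa [List.map_append, mul_assoc] using this

lemma r_map (f : G) {A B : List G} (h : R A B) :
    R (A.map fun x => f * x * f⁻¹) (B.map fun x => f * x * f⁻¹) :=
  Relation.ReflTransGen.lift _ (fun _ _ hab => move_map f hab) _ _ h

lemma r_symm {A B : List G} (h : R A B) : R B A :=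
  (@Relation.ReflTransGen.stdSymm _ _ ⟨fun _ _ => move_symm⟩).symm _ _ h

lemma prod_map_conj (f : G) (l : List G) :
    (l.map fun x => f * x * f⁻¹).prod = f * l.prod * f⁻¹ := by
  induction l with
  | nil => simp
  | cons a l ih => simp only [List.map_cons, List.prod_cons, ih]; group

/-- slide `a` to the right past `l`, using right moves -/
lemma slideRight : ∀ (l p : List G) (a : G),
    R (p ++ a :: l) (p ++ l ++ [l.prod⁻¹ * a * l.prod]) := by
  intro l
  induction l with
  | nil => intro p a; simp; exact .refl
  | cons b l ih =>
      intro p a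
      have h1 : HurwitzMove (p ++ a :: b :: l) (p ++ b :: (b⁻¹ * a * b) :: l) :=
        HurwitzMove.right p l a b
      have h2 := ih (p ++ [b]) (b⁻¹ * a * b)
      refine (Relation.ReflTransGen.single h1).trans ?_
      simpa [List.append_assoc, mul_assoc] using h2

/-- slide `a` to the right past `l`, conjugating everything, using left moves -/
lemma slideRightConj : ∀ (l p : List G) (a : G),
    R (p ++ a :: l) (p ++ l.map (fun x => a * x * a⁻¹) ++ [a]) := by
  intro l
  induction l with
  | nil => intro p a; simp; exact .refl
  | cons b l ih =>
      intro p a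
      have h1 : HurwitzMove (p ++ a :: b :: l) (p ++ (a * b * a⁻¹) :: a :: l) :=
        HurwitzMove.left p l a b
      have h2 := ih (p ++ [a * b * a⁻¹]) a
      refine (Relation.ReflTransGen.single h1).trans ?_
      simpa [List.append_assoc] using h2

/-- slide the last element `b` to the left past `l`, using left moves -/
lemma slideLastLeft : ∀ (l p : List G) (b : G),
    R (p ++ l ++ [b]) (p ++ (l.prod * b * l.prod⁻¹) :: l) := by
  intro l
  induction l with
  | nil => intro p b; simp; exact .refl
  | cons a l ih =>
      intro p b
      have h2 := ih (p ++ [a]) b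
      have h1 : HurwitzMove (p ++ a :: (l.prod * b * l.prod⁻¹) :: l)
          (p ++ (a * (l.prod * b * l.prod⁻¹) * a⁻¹) :: a :: l) :=
        HurwitzMove.left p l a (l.prod * b * l.prod⁻¹)
      have h2' : R (p ++ (a :: l) ++ [b]) (p ++ a :: (l.prod * b * l.prod⁻¹) :: l) := by
        simpa [List.append_assoc] using h2
      refine h2'.trans (Relation.ReflTransGen.single ?_)
      simpa [mul_assoc, mul_inv_rev] using h1

/-- key lemma: conjugate by a member, when product is 1 -/
lemma conj_member : ∀ (l₁ l₂ : List G) (t : G), (l₁ ++ t :: l₂).prod = 1 →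
    R (l₁ ++ t :: l₂) ((l₁ ++ t :: l₂).map fun x => t * x * t⁻¹) := by
  intro l₁
  induction l₁ with
  | nil =>
      intro l₂ t h
      simp only [List.nil_append, List.prod_cons] at h
      have hl₂ : l₂.prod = t⁻¹ := by
        rw [← one_mul l₂.prod, ← inv_mul_cancel t, mul_assoc, h, mul_one]
      have s1 := slideRightConj l₂ ([] : List G) t
      have s2 := slideLastLeft (l₂.map fun x => t * x * t⁻¹) ([] : List G) t
      rw [prod_map_conj, hl₂] at s2
      simp only [List.nil_append] at s1 s2
      have : R (t :: l₂) ((t * t⁻¹ * t⁻¹ * t * (t * t⁻¹ * t⁻¹)⁻¹) ::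
          l₂.map fun x => t * x * t⁻¹) := s1.trans s2
      simpa [mul_assoc] using this
  | cons a l₁ ih =>
      intro l₂ t h
      set M := l₁ ++ t :: l₂ with hM
      have hMa : (a :: M).prod = 1 := by rw [hM]; exact h
      have hMp : M.prod = a⁻¹ := by
        rw [List.prod_cons] at hMa
        rw [← one_mul M.prod, ← inv_mul_cancel a, mul_assoc, hMa, mul_one]
      -- step 1: rotate a to the end
      have s1 := slideRight M ([] : List G) a
      rw [hMp] at s1
      simp only [List.nil_append, inv_inv] at s1
      have s1' : R (a :: M) (M ++ [a]) := by
        simpa [mul_assoc] using s1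
      -- step 2: apply IH to M ++ [a] = l₁ ++ t :: (l₂ ++ [a])
      have hprod : (l₁ ++ t :: (l₂ ++ [a])).prod = 1 := by
        have : (l₁ ++ t :: (l₂ ++ [a])) = M ++ [a] := by simp [hM]
        rw [this, List.prod_append, hMp]
        simp
      have s2 := ih (l₂ ++ [a]) t hprod
      have hre : (l₁ ++ t :: (l₂ ++ [a])) = M ++ [a] := by simp [hM]
      rw [hre] at s2
      have hmapre : ((M ++ [a]).map fun x => t * x * t⁻¹)
          = (M.map fun x => t * x * t⁻¹) ++ [t * a * t⁻¹] := by simp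
      rw [hmapre] at s2
      -- step 3: rotate the conjugated a back to the front
      have s3 := slideLastLeft (M.map fun x => t * x * t⁻¹) ([] : List G) (t * a * t⁻¹)
      rw [prod_map_conj, hMp] at s3
      simp only [List.nil_append] at s3
      have goal_eq : ((a :: M).map fun x => t * x * t⁻¹)
          = (t * a⁻¹ * t⁻¹ * (t * a * t⁻¹) * (t * a⁻¹ * t⁻¹)⁻¹) ::
            (M.map fun x => t * x * t⁻¹) := by
        simp [mul_assoc]
      show Relation.ReflTransGen HurwitzMove (a :: M) ((a :: M).map fun x => t * x * t⁻¹)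
      rw [goal_eq]
      exact (s1'.trans s2).trans s3

end HurwitzAux

/-- If the product of the entries of `L` is `1` and `f` lies in the subgroup
generated by the entries of `L`, then the globally conjugated tuple is obtained
from `L` by a finite sequence of Hurwitz moves. -/
theorem hurwitz_reaches_global_conjugate {G : Type*} [Group G] (L : List G)
    (hL : L.prod = 1) (f : G) (hf : f ∈ Subgroup.closure {g : G | g ∈ L}) :
    Relation.ReflTransGen HurwitzMove L (L.map fun t => f * t * f⁻¹) := by
  induction hf using Subgroup.closure_induction with
  | mem t ht =>
      obtain ⟨l₁, l₂, rfl⟩ := List.append_of_mem ht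
      exact HurwitzAux.conj_member l₁ l₂ t hL
  | one => simpa using Relation.ReflTransGen.refl
  | mul x y hx hy hrx hry =>
      have h2 := HurwitzAux.r_map x hry
      have : (L.map fun t => y * t * y⁻¹).map (fun t => x * t * x⁻¹)
          = L.map fun t => (x * y) * t * (x * y)⁻¹ := by
        simp [List.map_map, Function.comp, mul_assoc]
      rw [this] at h2
      exact hrx.trans h2
  | inv x hx hrx =>
      have h2 := HurwitzAux.r_map x⁻¹ hrx
      have hcomp : ((fun t => x⁻¹ * t * x⁻¹⁻¹) ∘ (fun t : G => x * t * x⁻¹)) = id := by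
        funext z; simp [mul_assoc]
      rw [List.map_map, hcomp, List.map_id] at h2
      exact HurwitzAux.r_symm h2
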